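/- Let G be a connected graph with feedback edge set number k ≥ 3. Then dem(G) ≤ 2k - 2. -/

import Mathlib

open SimpleGraph

/-- `e` is monitored by vertex `x` in `G`: some vertex `y` has its distance to `x`
changed when `e` is deleted (distances in `ℕ∞`, `⊤` if disconnected). -/
def monitors {V : Type*} (G : SimpleGraph V) (x : V) (e : Sym2 V) : Prop :=
  ∃ y : V, G.edist x y ≠ (G.deleteEdges {e}).edist x y

/-- `M` is a distance-edge-monitoring set of `G`. -/
def IsDEMSet {V : Type*} (G : SimpleGraph V) (M : Set V) : Prop :=
  ∀ e ∈ G.edgeSet, ∃ x ∈ M, monitors G x e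

/-- The smallest size of a distance-edge-monitoring set of `G`. -/
noncomputable def dem (V : Type*) [Fintype V] (G : SimpleGraph V) : ℕ :=
  sInf {k | ∃ M : Finset V, M.card = k ∧ IsDEMSet G ↑M}

/-- The set `P(M, e)` of pairs `(x, y)`, `x ∈ M`, whose distance changes when `e` is deleted. -/
def pairs {V : Type*} (G : SimpleGraph V) (M : Set V) (e : Sym2 V) : Set (V × V) :=
  {p | p.1 ∈ M ∧ G.edist p.1 p.2 ≠ (G.deleteEdges {e}).edist p.1 p.2}

/-- `C` is a vertex cover of `G`. -/
def IsVC {V : Type*} (G : SimpleGraph V) (C : Set V) : Prop :=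
  ∀ e ∈ G.edgeSet, ∃ v ∈ C, v ∈ e

/-- The vertex cover number of `G`. -/
noncomputable def vcNum (V : Type*) [Fintype V] (G : SimpleGraph V) : ℕ :=
  sInf {k | ∃ C : Finset V, C.card = k ∧ IsVC G ↑C}

/-- The feedback edge set number: minimum number of edges whose deletion leaves a forest. -/
noncomputable def fes (V : Type*) [Fintype V] (G : SimpleGraph V) : ℕ :=
  sInf {k | ∃ F : Finset (Sym2 V), F.card = k ∧ (G.deleteEdges ↑F).IsAcyclic}

namespace Stmt16Aux

variable {V : Type*}

/-- Pick an endpoint of an unordered pair: the one with the larger key `κ`,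
breaking ties using an injective function `τ`. -/
noncomputable def pick (κ τ : V → ℕ) (hτ : Function.Injective τ) : Sym2 V → V :=
  Sym2.lift ⟨fun a b => if κ a < κ b then b else if κ b < κ a then a
      else if τ a ≤ τ b then b else a, by
    intro a b
    by_cases hab : a = b
    · subst hab; rfl
    · have hne : τ a ≠ τ b := fun hh => hab (hτ hh)
      dsimp only
      split_ifs <;> first
        | rfl
        | omega
        | exact absurd (hτ (by omega)) hab
        | exact absurd (hτ (by omega)).symm hab⟩

lemma pick_spec (κ τ : V → ℕ) (hτ : Function.Injective τ) (a b : V) :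
    (pick κ τ hτ s(a, b) = a ∧ κ b ≤ κ a) ∨ (pick κ τ hτ s(a, b) = b ∧ κ a ≤ κ b) := by
  have : pick κ τ hτ s(a, b) = if κ a < κ b then b else if κ b < κ a then a
      else if τ a ≤ τ b then b else a := rfl
  rw [this]
  split_ifs with h1 h2 h3
  · right; exact ⟨rfl, by omega⟩
  · left; exact ⟨rfl, by omega⟩
  · right; exact ⟨rfl, by omega⟩
  · left; exact ⟨rfl, by omega⟩

lemma pick_mem (κ τ : V → ℕ) (hτ : Function.Injective τ) (e : Sym2 V) :
    pick κ τ hτ e ∈ e := by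
  induction e with
  | _ a b =>
    rcases pick_spec κ τ hτ a b with ⟨h, -⟩ | ⟨h, -⟩ <;> rw [h] <;> simp


lemma dist_le_dist_add_one {G : SimpleGraph V} {x w v : V} (h : G.Adj w v)
    (hr : G.Reachable x w) : G.dist x v ≤ G.dist x w + 1 := by
  obtain ⟨p, hp⟩ := hr.exists_walk_length_eq_dist
  have := SimpleGraph.dist_le (p.concat h)
  rwa [SimpleGraph.Walk.length_concat, hp] at this

lemma exists_parent {G : SimpleGraph V} {r v : V} (h : G.Reachable r v) (hne : v ≠ r) :
    ∃ w, G.Adj w v ∧ G.dist r w + 1 = G.dist r v := by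
  obtain ⟨p, hp⟩ := h.exists_walk_length_eq_dist
  cases hq : p.reverse with
  | nil => exact absurd rfl hne
  | @cons _ b _ h' q =>
    refine ⟨b, h'.symm, ?_⟩
    have h1 : G.dist r b ≤ q.length := by
      have := SimpleGraph.dist_le q.reverse
      rwa [SimpleGraph.Walk.length_reverse] at this
    have h2 : q.length + 1 = G.dist r v := by
      have := congrArg SimpleGraph.Walk.length hq
      rw [SimpleGraph.Walk.length_reverse, hp] at this
      simpa [eq_comm] using this
    have h3 : G.dist r v ≤ G.dist r b + 1 := dist_le_dist_add_one h'.symm ⟨q.reverse⟩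
    omega

lemma edist_coe_dist {G : SimpleGraph V} {x y : V} (h : G.Reachable x y) :
    G.edist x y = (G.dist x y : ℕ∞) :=
  (ENat.coe_toNat (SimpleGraph.edist_ne_top_iff_reachable.mpr h)).symm

lemma endpoint_monitors {G : SimpleGraph V} {e : Sym2 V} (he : e ∈ G.edgeSet) {x : V}
    (hx : x ∈ e) : monitors G x e := by
  obtain ⟨y, rfl⟩ := Sym2.mem_iff_exists.mp hx
  have hadj : G.Adj x y := he
  refine ⟨y, ?_⟩
  rw [SimpleGraph.edist_eq_one_iff_adj.mpr hadj]
  intro hcontra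
  have : (G.deleteEdges {s(x, y)}).Adj x y :=
    SimpleGraph.edist_eq_one_iff_adj.mp hcontra.symm
  simp at this

lemma monitors_of_parent_unique {G : SimpleGraph V} (hG : G.Connected) (x u v : V)
    (huv : G.Adj u v) (hd : G.dist x u + 1 = G.dist x v)
    (huniq : ∀ z, G.Adj z v → G.dist x z + 1 = G.dist x v → z = u) :
    monitors G x s(u, v) := by
  refine ⟨v, ?_⟩
  have hre : G.Reachable x v := hG.preconnected x v
  have hne : G.edist x v = (G.dist x v : ℕ∞) := edist_coe_dist hre
  intro hcontra
  rw [hne] at hcontra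
  obtain ⟨W, hW⟩ := SimpleGraph.exists_walk_of_edist_eq_coe hcontra.symm
  -- every walk in the deleted graph from x to v has length ≥ dist x v + 1
  have hvx : v ≠ x := by
    intro hvx
    rw [hvx, SimpleGraph.dist_self] at hd
    omega
  cases hq : W.reverse with
  | nil => exact absurd rfl hvx
  | @cons _ b _ h' q =>
    have hGadj : G.Adj v b := (SimpleGraph.deleteEdges_adj.mp h').1
    have hnotin := (SimpleGraph.deleteEdges_adj.mp h').2
    have hbu : b ≠ u := by
      intro hbu
      subst hbu
      exact hnotin (by rw [Sym2.eq_swap]; simp)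
    have hnp : ¬(G.dist x b + 1 = G.dist x v) := fun hp => hbu (huniq b hGadj.symm hp)
    have h4 : G.dist x v ≤ G.dist x b + 1 :=
      dist_le_dist_add_one hGadj.symm (hG.preconnected x b)
    have h5 : G.dist x v ≤ G.dist x b := by omega
    have h6 : G.dist x b ≤ q.length := by
      have := SimpleGraph.dist_le ((q.mapLe (SimpleGraph.deleteEdges_le _)).reverse)
      rwa [SimpleGraph.Walk.length_reverse, SimpleGraph.Walk.length_map] at this
    have h7 : q.length + 1 = G.dist x v := by
      have := congrArg SimpleGraph.Walk.length hq
      rw [SimpleGraph.Walk.length_reverse, hW] at this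
      simpa [eq_comm] using this
    omega


lemma card_le_of_acyclic [Fintype V] {H : SimpleGraph V} (hH : H.IsAcyclic) :
    H.edgeSet.toFinite.toFinset.card ≤ Fintype.card V - 1 := by
  classical
  cases isEmpty_or_nonempty V with
  | inl hemp =>
    have : H.edgeSet.toFinite.toFinset = ∅ := by
      ext e
      induction e with
      | _ a b => exact (hemp.false a).elim
    simp [this]
  | inr hne =>
    let root : V → V := fun v => (H.connectedComponentMk v).out
    let δ : V → ℕ := fun v => H.dist (root v) v
    have hreach : ∀ v, H.Reachable (root v) v := by
      intro v
      exact SimpleGraph.ConnectedComponent.eq.mp (Quot.out_eq _)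
    have hrootadj : ∀ {a b : V}, H.Adj a b → root a = root b := by
      intro a b hab
      show (H.connectedComponentMk a).out = (H.connectedComponentMk b).out
      rw [SimpleGraph.ConnectedComponent.connectedComponentMk_eq_of_adj hab]
    -- adjacent vertices have δ differing by at most one
    have hclass : ∀ {a b : V}, H.Adj a b → δ b ≤ δ a + 1 := by
      intro a b hab
      have h1 : H.dist (root a) b ≤ H.dist (root a) a + 1 :=
        dist_le_dist_add_one hab (hreach a)
      have h2 : δ b = H.dist (root a) b := by
        show H.dist (root b) b = H.dist (root a) b
        rw [hrootadj hab]
      have h3 : δ a = H.dist (root a) a := rfl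
      omega
    -- adjacent vertices have different δ (uses acyclicity)
    have hdiff : ∀ {a b : V}, H.Adj a b → δ a ≠ δ b := by
      intro a b hab heq
      obtain ⟨pa, hpa0⟩ := (hreach a).exists_walk_length_eq_dist
      obtain ⟨pb0, hpb0⟩ := (hreach b).exists_walk_length_eq_dist
      have hpa : pa.length = δ a := hpa0
      let pb : H.Walk (root a) b := pb0.copy (hrootadj hab).symm rfl
      have hpb : pb.length = δ b := by
        show (pb0.copy (hrootadj hab).symm rfl).length = δ b
        rw [SimpleGraph.Walk.length_copy]
        exact hpb0
      have hδb : δ b = H.dist (root a) b := by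
        show H.dist (root b) b = H.dist (root a) b
        rw [hrootadj hab]
      have hpaP : pa.IsPath := SimpleGraph.Walk.isPath_of_length_eq_dist pa hpa0
      have hpbP : pb.IsPath := by
        apply SimpleGraph.Walk.isPath_of_length_eq_dist
        rw [hpb, hδb]
      by_cases hmem : b ∈ pa.support
      · have hqP : (pa.takeUntil b hmem).IsPath := hpaP.takeUntil hmem
        have hQ : pa.takeUntil b hmem = pb := by
          have := hH.path_unique ⟨_, hqP⟩ ⟨pb, hpbP⟩
          exact congrArg Subtype.val this
        have hlen : (pa.takeUntil b hmem).length + (pa.dropUntil b hmem).length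
            = pa.length := by
          rw [← SimpleGraph.Walk.length_append]
          exact congrArg SimpleGraph.Walk.length (pa.take_spec hmem)
        have h1 : (pa.takeUntil b hmem).length = δ b := by rw [hQ]; exact hpb
        have hdz : (pa.dropUntil b hmem).length = 0 := by omega
        exact hab.ne' (SimpleGraph.Walk.eq_of_length_eq_zero hdz)
      · have hW1P : (SimpleGraph.Walk.cons hab.symm pa.reverse).IsPath := by
          apply SimpleGraph.Walk.IsPath.cons hpaP.reverse
          rwa [SimpleGraph.Walk.support_reverse, List.mem_reverse]
        have hW2P : pb.reverse.IsPath := hpbP.reverse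
        have := hH.path_unique ⟨_, hW1P⟩ ⟨pb.reverse, hW2P⟩
        have hlen := congrArg SimpleGraph.Walk.length (congrArg Subtype.val this)
        simp only [SimpleGraph.Walk.length_cons, SimpleGraph.Walk.length_reverse] at hlen
        rw [hpa, hpb] at hlen
        omega
    -- uniqueness of the closer neighbour (uses acyclicity)
    have huniq : ∀ {a b c : V}, H.Adj a c → H.Adj b c → δ a + 1 = δ c → δ b + 1 = δ c →
        a = b := by
      intro a b c hac hbc hda hdb
      obtain ⟨pa0, hpa0⟩ := (hreach a).exists_walk_length_eq_dist
      obtain ⟨pb0, hpb0⟩ := (hreach b).exists_walk_length_eq_dist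
      let pa : H.Walk (root c) a := pa0.copy (hrootadj hac) rfl
      let pb : H.Walk (root c) b := pb0.copy (hrootadj hbc) rfl
      have hpa : pa.length = δ a := by
        show (pa0.copy (hrootadj hac) rfl).length = δ a
        rw [SimpleGraph.Walk.length_copy]; exact hpa0
      have hpb : pb.length = δ b := by
        show (pb0.copy (hrootadj hbc) rfl).length = δ b
        rw [SimpleGraph.Walk.length_copy]; exact hpb0
      have hδa : δ a = H.dist (root c) a := by
        show H.dist (root a) a = H.dist (root c) a
        rw [hrootadj hac]
      have hδb : δ b = H.dist (root c) b := by
        show H.dist (root b) b = H.dist (root c) b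
        rw [hrootadj hbc]
      have hδc : δ c = H.dist (root c) c := rfl
      have hpaP : pa.IsPath := by
        apply SimpleGraph.Walk.isPath_of_length_eq_dist
        rw [hpa, hδa]
      have hpbP : pb.IsPath := by
        apply SimpleGraph.Walk.isPath_of_length_eq_dist
        rw [hpb, hδb]
      have hcmem : ∀ {x : V} (p : H.Walk (root c) x), p.length + 1 = δ c →
          c ∉ p.support := by
        intro x p hlen hmem
        have h1 : H.dist (root c) c ≤ (p.takeUntil c hmem).length :=
          SimpleGraph.dist_le _
        have h2 := SimpleGraph.Walk.length_takeUntil_le p hmem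
        omega
      have hW1P : (SimpleGraph.Walk.cons hac.symm pa.reverse).IsPath := by
        apply SimpleGraph.Walk.IsPath.cons hpaP.reverse
        rw [SimpleGraph.Walk.support_reverse, List.mem_reverse]
        exact hcmem pa (by omega)
      have hW2P : (SimpleGraph.Walk.cons hbc.symm pb.reverse).IsPath := by
        apply SimpleGraph.Walk.IsPath.cons hpbP.reverse
        rw [SimpleGraph.Walk.support_reverse, List.mem_reverse]
        exact hcmem pb (by omega)
      have := hH.path_unique ⟨_, hW1P⟩ ⟨_, hW2P⟩
      have hsup := congrArg SimpleGraph.Walk.support (congrArg Subtype.val this)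
      rw [SimpleGraph.Walk.support_cons, SimpleGraph.Walk.support_cons,
        (pa.reverse).support_eq_cons, (pb.reverse).support_eq_cons] at hsup
      simp only [List.cons.injEq] at hsup
      exact hsup.2.1
    -- the injection from edges to vertices
    let τ : V → ℕ := fun v => ((Fintype.equivFin V) v : ℕ)
    have hτ : Function.Injective τ := fun a b hab => by
      apply (Fintype.equivFin V).injective
      exact Fin.ext hab
    let f : Sym2 V → V := pick δ τ hτ
    have hchild : ∀ {a b : V}, H.Adj a b → δ a < δ b → f s(a, b) = b := by
      intro a b hab hlt
      rcases pick_spec δ τ hτ a b with ⟨h, hle⟩ | ⟨h, -⟩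
      · omega
      · exact h
    let r₀ : V := root (Classical.arbitrary V)
    have hδr₀ : δ r₀ = 0 := by
      have hrr : root r₀ = r₀ := by
        show (H.connectedComponentMk (H.connectedComponentMk
          (Classical.arbitrary V)).out).out = _
        exact congrArg Quot.out (Quot.out_eq _)
      show H.dist (root r₀) r₀ = 0
      rw [hrr, SimpleGraph.dist_self]
    have hchild_pos : ∀ {a b : V}, H.Adj a b → δ a < δ b → f s(a, b) ≠ r₀ := by
      intro a b hab hlt hcon
      rw [hchild hab hlt] at hcon
      rw [hcon, hδr₀] at hlt
      omega
    have key : H.edgeSet.toFinite.toFinset.card ≤ (Finset.univ.erase r₀).card := by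
      apply Finset.card_le_card_of_injOn f
      · intro e he
        rw [Finset.mem_coe, Set.Finite.mem_toFinset] at he
        induction e with
        | _ a b =>
          have hab : H.Adj a b := he
          rcases Nat.lt_trichotomy (δ a) (δ b) with h | h | h
          · exact Finset.mem_erase.mpr ⟨hchild_pos hab h, Finset.mem_univ _⟩
          · exact absurd h (hdiff hab)
          · rw [Sym2.eq_swap]
            exact Finset.mem_erase.mpr ⟨hchild_pos hab.symm h, Finset.mem_univ _⟩
      · intro e₁ h₁ e₂ h₂ hf
        rw [Set.Finite.coe_toFinset] at h₁ h₂
        induction e₁ with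
        | _ a b =>
        induction e₂ with
        | _ c e =>
        have hab : H.Adj a b := h₁
        have hce : H.Adj c e := h₂
        have hone : ∀ {x y : V}, H.Adj x y → δ x < δ y → δ x + 1 = δ y := by
          intro x y hxy hlt
          have := hclass hxy
          omega
        rcases Nat.lt_trichotomy (δ a) (δ b) with h | h | h
        · rcases Nat.lt_trichotomy (δ c) (δ e) with h' | h' | h'
          · rw [hchild hab h, hchild hce h'] at hf
            have hfd : δ b = δ e := by rw [hf]
            have hpar : a = c := huniq (hf ▸ hab) (hf ▸ hce) (by have := hone hab h; omega)
              (by have := hone hce h'; omega)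
            rw [hpar, hf]
          · exact absurd h' (hdiff hce)
          · rw [hchild hab h, Sym2.eq_swap (a := c) (b := e),
              hchild hce.symm h'] at hf
            have hfd : δ b = δ c := by rw [hf]
            have hpar : a = e := huniq (hf ▸ hab) (hf ▸ hce.symm)
              (by have := hone hab h; omega) (by have := hone hce.symm h'; omega)
            rw [hpar, hf, Sym2.eq_swap]
        · exact absurd h (hdiff hab)
        · rcases Nat.lt_trichotomy (δ c) (δ e) with h' | h' | h'
          · rw [Sym2.eq_swap (a := a) (b := b), hchild hab.symm h,
              hchild hce h'] at hf
            have hfd : δ a = δ e := by rw [hf]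
            have hpar : b = c := huniq (hf ▸ hab.symm) (hf ▸ hce)
              (by have := hone hab.symm h; omega) (by have := hone hce h'; omega)
            rw [hpar, hf, Sym2.eq_swap]
          · exact absurd h' (hdiff hce)
          · rw [Sym2.eq_swap (a := a) (b := b), hchild hab.symm h,
              Sym2.eq_swap (a := c) (b := e), hchild hce.symm h'] at hf
            have hfd : δ a = δ c := by rw [hf]
            have hpar : b = e := huniq (hf ▸ hab.symm) (hf ▸ hce.symm)
              (by have := hone hab.symm h; omega) (by have := hone hce.symm h'; omega)
            rw [hpar, hf]
    calc H.edgeSet.toFinite.toFinset.card ≤ (Finset.univ.erase r₀).card := key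
      _ = Fintype.card V - 1 := by
        rw [Finset.card_erase_of_mem (Finset.mem_univ _), Finset.card_univ]

end Stmt16Aux

open Stmt16Aux

theorem stmt16 {V : Type*} [Fintype V] (G : SimpleGraph V) (hG : G.Connected)
    (k : ℕ) (hk : fes V G = k) (hk3 : 3 ≤ k) :
    dem V G ≤ 2 * k - 2 := by
  classical
  obtain ⟨x₀⟩ := hG.nonempty
  -- a minimum feedback edge set
  have hmemfes : ∃ F : Finset (Sym2 V), F.card = fes V G ∧ (G.deleteEdges ↑F).IsAcyclic := by
    have hne : {k | ∃ F : Finset (Sym2 V), F.card = k ∧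
        (G.deleteEdges ↑F).IsAcyclic}.Nonempty := by
      refine ⟨G.edgeSet.toFinite.toFinset.card, G.edgeSet.toFinite.toFinset, rfl, ?_⟩
      have h1 : G.deleteEdges ↑(G.edgeSet.toFinite.toFinset) = G.deleteEdges G.edgeSet := by
        rw [Set.Finite.coe_toFinset]
      rw [h1, SimpleGraph.deleteEdges_edgeSet, sdiff_self]
      exact SimpleGraph.isAcyclic_bot
    exact Nat.sInf_mem hne
  obtain ⟨F, hFcard, hFac⟩ := hmemfes
  rw [hk] at hFcard
  -- a parent function for the BFS tree from x₀
  have hpar : ∀ v : V, v ≠ x₀ → ∃ w, G.Adj w v ∧ G.dist x₀ w + 1 = G.dist x₀ v :=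
    fun v hv => exists_parent (hG.preconnected x₀ v) hv
  choose! w hw1 hw2 using hpar
  -- the set of n - 1 tree edges
  have hinj : Set.InjOn (fun v => s(w v, v)) ↑(Finset.univ.erase x₀) := by
    intro a ha b hb hab
    simp only at hab
    rcases Sym2.eq_iff.mp hab with ⟨h1, h2⟩ | ⟨h1, h2⟩
    · exact h2
    · have ha' : a ≠ x₀ := (Finset.mem_erase.mp (Finset.mem_coe.mp ha)).1
      have hb' : b ≠ x₀ := (Finset.mem_erase.mp (Finset.mem_coe.mp hb)).1
      have h3 := hw2 a ha'
      have h4 := hw2 b hb'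
      rw [h1] at h3
      rw [← h2] at h4
      omega
  have hTcard : ((Finset.univ.erase x₀).image (fun v => s(w v, v))).card
      = Fintype.card V - 1 := by
    rw [Finset.card_image_of_injOn hinj,
      Finset.card_erase_of_mem (Finset.mem_univ _), Finset.card_univ]
  have hTsub : (Finset.univ.erase x₀).image (fun v => s(w v, v))
      ⊆ G.edgeSet.toFinite.toFinset := by
    intro e he
    obtain ⟨v, hv, rfl⟩ := Finset.mem_image.mp he
    rw [Set.Finite.mem_toFinset]
    exact hw1 v (Finset.mem_erase.mp hv).1
  -- the number of edges is at most (n - 1) + k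
  have hsplit : G.edgeSet.toFinite.toFinset
      ⊆ (G.deleteEdges ↑F).edgeSet.toFinite.toFinset ∪ F := by
    intro e he
    by_cases hF : e ∈ F
    · exact Finset.mem_union_right _ hF
    · apply Finset.mem_union_left
      rw [Set.Finite.mem_toFinset] at he ⊢
      rw [SimpleGraph.edgeSet_deleteEdges]
      exact ⟨he, hF⟩
  have hm : G.edgeSet.toFinite.toFinset.card ≤ (Fintype.card V - 1) + k := by
    calc G.edgeSet.toFinite.toFinset.card
        ≤ ((G.deleteEdges ↑F).edgeSet.toFinite.toFinset ∪ F).card :=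
          Finset.card_le_card hsplit
      _ ≤ (G.deleteEdges ↑F).edgeSet.toFinite.toFinset.card + F.card :=
          Finset.card_union_le _ _
      _ ≤ (Fintype.card V - 1) + k :=
          Nat.add_le_add (card_le_of_acyclic hFac) hFcard.le
  -- so at most k non-tree edges
  have hsd : (G.edgeSet.toFinite.toFinset
      \ (Finset.univ.erase x₀).image (fun v => s(w v, v))).card ≤ k := by
    rw [Finset.card_sdiff_of_subset hTsub]
    have hTle := Finset.card_le_card hTsub
    omega
  -- good edges are monitored by x₀ alone
  have hcls : ∀ {a b : V}, G.Adj a b → G.dist x₀ b ≤ G.dist x₀ a + 1 :=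
    fun hab => dist_le_dist_add_one hab (hG.preconnected _ _)
  let Good : Sym2 V → Prop := fun e => ∃ u v, e = s(u, v) ∧
    G.dist x₀ u + 1 = G.dist x₀ v ∧
    ∀ z, G.Adj z v → G.dist x₀ z + 1 = G.dist x₀ v → z = u
  let Bad : Finset (Sym2 V) :=
    G.edgeSet.toFinite.toFinset.filter (fun e => ¬ Good e)
  let τ : V → ℕ := fun v => ((Fintype.equivFin V) v : ℕ)
  have hτ : Function.Injective τ := fun a b hab => by
    apply (Fintype.equivFin V).injective
    exact Fin.ext hab
  let f : Sym2 V → V := pick (G.dist x₀) τ hτ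
  have hfchild : ∀ {a b : V}, G.dist x₀ a < G.dist x₀ b → f s(a, b) = b := by
    intro a b hlt
    rcases pick_spec (G.dist x₀) τ hτ a b with ⟨h, hle⟩ | ⟨h, -⟩
    · omega
    · exact h
  let M : Finset V := insert x₀ (Bad.image f)
  -- M is a distance-edge-monitoring set
  have hDEM : IsDEMSet G ↑M := by
    intro e he
    by_cases hg : Good e
    · obtain ⟨u, v, rfl, hd1, hun⟩ := hg
      refine ⟨x₀, ?_, monitors_of_parent_unique hG x₀ u v he hd1 hun⟩
      exact Finset.mem_coe.mpr (Finset.mem_insert_self _ _)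
    · have heB : e ∈ Bad :=
        Finset.mem_filter.mpr ⟨Set.Finite.mem_toFinset _ |>.mpr he, hg⟩
      refine ⟨f e, ?_, endpoint_monitors he (pick_mem _ _ _ e)⟩
      exact Finset.mem_coe.mpr (Finset.mem_insert_of_mem (Finset.mem_image_of_mem f heB))
  -- every vertex chosen for a bad edge either has two parents or lies on a cross edge
  let P₁ : V → Prop := fun v => ∃ z, G.Adj z v ∧
    G.dist x₀ z + 1 = G.dist x₀ v ∧ z ≠ w v
  let P₂ : V → Prop := fun v => ∃ e, e ∈ Bad ∧ f e = v ∧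
    ∃ a b, e = s(a, b) ∧ G.dist x₀ a = G.dist x₀ b
  have hP : ∀ v ∈ Bad.image f, P₁ v ∨ P₂ v := by
    intro v hv
    obtain ⟨e, heB, hfe⟩ := Finset.mem_image.mp hv
    have heE : e ∈ G.edgeSet := by
      have := (Finset.mem_filter.mp heB).1
      rwa [Set.Finite.mem_toFinset] at this
    have hgB : ¬ Good e := (Finset.mem_filter.mp heB).2
    induction e with
    | _ a b =>
      have hadj : G.Adj a b := heE
      rcases Nat.lt_trichotomy (G.dist x₀ a) (G.dist x₀ b) with h | h | h
      · -- b is the chosen vertex, and b must have two parents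
        rw [hfchild h] at hfe
        rw [← hfe]
        have hone : G.dist x₀ a + 1 = G.dist x₀ b := by
          have := hcls hadj; omega
        have h2 : ∃ z, G.Adj z b ∧ G.dist x₀ z + 1 = G.dist x₀ b ∧ z ≠ a := by
          by_contra hall
          push_neg at hall
          exact hgB ⟨a, b, rfl, hone, fun z hz1 hz2 => hall z hz1 hz2⟩
        obtain ⟨z, hz1, hz2, hz3⟩ := h2
        by_cases hzw : z = w b
        · exact Or.inl ⟨a, hadj, hone, fun hc => hz3 (hzw.trans hc.symm)⟩
        · exact Or.inl ⟨z, hz1, hz2, hzw⟩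
      · exact Or.inr ⟨s(a, b), heB, hfe, a, b, rfl, h⟩
      · -- a is the chosen vertex
        rw [Sym2.eq_swap, hfchild h] at hfe
        rw [← hfe]
        have hone : G.dist x₀ b + 1 = G.dist x₀ a := by
          have := hcls hadj.symm; omega
        have h2 : ∃ z, G.Adj z a ∧ G.dist x₀ z + 1 = G.dist x₀ a ∧ z ≠ b := by
          by_contra hall
          push_neg at hall
          exact hgB ⟨b, a, Sym2.eq_swap, hone, fun z hz1 hz2 => hall z hz1 hz2⟩
        obtain ⟨z, hz1, hz2, hz3⟩ := h2
        by_cases hzw : z = w a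
        · exact Or.inl ⟨b, hadj.symm, hone, fun hc => hz3 (hzw.trans hc.symm)⟩
        · exact Or.inl ⟨z, hz1, hz2, hzw⟩
  -- the injection from chosen vertices to non-tree edges
  let ψ : V → Sym2 V := fun v =>
    if h : P₁ v then s(Classical.choose h, v)
    else if h2 : P₂ v then Classical.choose h2 else s(v, v)
  have hmaps : ∀ v ∈ Bad.image f, ψ v ∈ G.edgeSet.toFinite.toFinset
      \ (Finset.univ.erase x₀).image (fun u => s(w u, u)) := by
    intro v hv
    by_cases h1 : P₁ v
    · obtain ⟨hz1, hz2, hz3⟩ := Classical.choose_spec h1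
      have hψ : ψ v = s(Classical.choose h1, v) := dif_pos h1
      rw [hψ, Finset.mem_sdiff]
      constructor
      · rw [Set.Finite.mem_toFinset]
        exact hz1
      · intro hT
        obtain ⟨c, hc, hceq⟩ := Finset.mem_image.mp hT
        have hc' : c ≠ x₀ := (Finset.mem_erase.mp hc).1
        have h4 := hw2 c hc'
        rcases Sym2.eq_iff.mp hceq with ⟨e1, e2⟩ | ⟨e1, e2⟩
        · exact hz3 (by rw [← e1, e2])
        · rw [e1] at h4
          rw [← e2] at hz2
          omega
    · have h2 : P₂ v := (hP v hv).resolve_left h1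
      obtain ⟨heB, hfe, a, b, hab, hdd⟩ := Classical.choose_spec h2
      have hψ : ψ v = Classical.choose h2 := (dif_neg h1).trans (dif_pos h2)
      rw [hψ, Finset.mem_sdiff]
      constructor
      · exact Finset.filter_subset _ _ heB
      · intro hT
        obtain ⟨c, hc, hceq⟩ := Finset.mem_image.mp hT
        have hc' : c ≠ x₀ := (Finset.mem_erase.mp hc).1
        have h4 := hw2 c hc'
        rw [hab] at hceq
        rcases Sym2.eq_iff.mp hceq.symm with ⟨e1, e2⟩ | ⟨e1, e2⟩
        · rw [← e1, ← e2] at h4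
          omega
        · rw [← e2, ← e1] at h4
          omega
  have hcrossne : ∀ {v : V} (h1 : ¬ P₁ v) (h2 : P₂ v) {z u : V},
      G.dist x₀ z + 1 = G.dist x₀ u → s(z, u) ≠ Classical.choose h2 := by
    intro v h1 h2 z u hzu hcon
    obtain ⟨heB, hfe, a, b, hab, hdd⟩ := Classical.choose_spec h2
    rw [hab] at hcon
    rcases Sym2.eq_iff.mp hcon with ⟨e1, e2⟩ | ⟨e1, e2⟩
    · rw [e1, e2] at hzu; omega
    · rw [e1, e2] at hzu; omega
  have hinjOn : Set.InjOn ψ ↑(Bad.image f) := by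
    intro v₁ hv₁ v₂ hv₂ hψeq
    by_cases h1 : P₁ v₁ <;> by_cases h2 : P₁ v₂
    · obtain ⟨ha1, ha2, ha3⟩ := Classical.choose_spec h1
      obtain ⟨hb1, hb2, hb3⟩ := Classical.choose_spec h2
      have e1 : ψ v₁ = s(Classical.choose h1, v₁) := dif_pos h1
      have e2 : ψ v₂ = s(Classical.choose h2, v₂) := dif_pos h2
      rw [e1, e2] at hψeq
      rcases Sym2.eq_iff.mp hψeq with ⟨e1, e2⟩ | ⟨e1, e2⟩
      · exact e2
      · rw [e1] at ha2
        rw [← e2] at hb2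
        omega
    · have h2' : P₂ v₂ := (hP v₂ (Finset.mem_coe.mp hv₂)).resolve_left h2
      have e1 : ψ v₁ = s(Classical.choose h1, v₁) := dif_pos h1
      have e2 : ψ v₂ = Classical.choose h2' := (dif_neg h2).trans (dif_pos h2')
      rw [e1, e2] at hψeq
      obtain ⟨ha1, ha2, ha3⟩ := Classical.choose_spec h1
      exact absurd hψeq (hcrossne h2 h2' ha2)
    · have h1' : P₂ v₁ := (hP v₁ (Finset.mem_coe.mp hv₁)).resolve_left h1
      have e1 : ψ v₁ = Classical.choose h1' := (dif_neg h1).trans (dif_pos h1')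
      have e2 : ψ v₂ = s(Classical.choose h2, v₂) := dif_pos h2
      rw [e1, e2] at hψeq
      obtain ⟨hb1, hb2, hb3⟩ := Classical.choose_spec h2
      exact absurd hψeq.symm (hcrossne h1 h1' hb2)
    · have h1' : P₂ v₁ := (hP v₁ (Finset.mem_coe.mp hv₁)).resolve_left h1
      have h2' : P₂ v₂ := (hP v₂ (Finset.mem_coe.mp hv₂)).resolve_left h2
      have e1 : ψ v₁ = Classical.choose h1' := (dif_neg h1).trans (dif_pos h1')
      have e2 : ψ v₂ = Classical.choose h2' := (dif_neg h2).trans (dif_pos h2')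
      rw [e1, e2] at hψeq
      obtain ⟨-, hfe1, -⟩ := Classical.choose_spec h1'
      obtain ⟨-, hfe2, -⟩ := Classical.choose_spec h2'
      rw [← hfe1, ← hfe2, hψeq]
  -- conclude
  have himg : (Bad.image f).card ≤ (G.edgeSet.toFinite.toFinset
      \ (Finset.univ.erase x₀).image (fun v => s(w v, v))).card :=
    Finset.card_le_card_of_injOn ψ hmaps hinjOn
  have hMcard : M.card ≤ k + 1 := by
    have hins := Finset.card_insert_le x₀ (Bad.image f)
    have : M.card ≤ (Bad.image f).card + 1 := hins
    omega
  have hdem : dem V G ≤ M.card := Nat.sInf_le ⟨M, rfl, hDEM⟩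
  omega
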